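/- Let $a > 1$, $b > 0$ and $M \in \mathbb{R}$ be fixed. There exists a constant $C$ such that for every $T > 0$, $\int_0^1 \Big(\log\frac{1+\zeta}{1-\zeta}\Big)^M (1-\zeta^2)^{b-1}\,\zeta^{-a-M}\exp(-T\zeta^{-1})\,d\zeta \le C\, T^{-a+1}$. -/

import Mathlib

open MeasureTheory Real Set
set_option maxHeartbeats 1000000

lemma aux_pow_exp (p : ℝ) (hp : 0 ≤ p) :
    ∃ c : ℝ, 1 ≤ c ∧ ∀ y : ℝ, 0 < y → y ^ p * Real.exp (-y) ≤ c := by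
  set n : ℕ := ⌈p⌉₊ + 1 with hn
  have hn1 : (1:ℝ) ≤ (n:ℝ) := by exact_mod_cast Nat.one_le_iff_ne_zero.mpr (by omega)
  refine ⟨(n:ℝ) ^ n, one_le_pow₀ hn1, fun y hy => ?_⟩
  rcases le_or_gt y 1 with h1 | h1
  · have h2 : y ^ p ≤ 1 := Real.rpow_le_one hy.le h1 hp
    have h3 : Real.exp (-y) ≤ 1 := Real.exp_le_one_iff.mpr (by linarith)
    nlinarith [one_le_pow₀ hn1 (n := n), Real.exp_pos (-y), Real.rpow_nonneg hy.le p]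
  · have hpn : p ≤ (n:ℝ) := by
      calc p ≤ (⌈p⌉₊ : ℝ) := Nat.le_ceil p
      _ ≤ (n:ℝ) := by exact_mod_cast Nat.le_succ _
    have h2 : y ^ p ≤ y ^ (n:ℝ) := Real.rpow_le_rpow_of_exponent_le h1.le hpn
    rw [Real.rpow_natCast] at h2
    have key : y ^ n ≤ (n:ℝ) ^ n * Real.exp y := by
      have h3 : y / n ≤ Real.exp (y / n) := by
        have := Real.add_one_le_exp (y / n)
        linarith
      have h4 : (y / n) ^ n ≤ Real.exp (y / n) ^ n :=
        pow_le_pow_left₀ (by positivity) h3 n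
      rw [← Real.exp_nat_mul] at h4
      have h5 : (n:ℝ) * (y / n) = y := by field_simp
      rw [h5] at h4
      calc y ^ n = ((n:ℝ) * (y / n)) ^ n := by rw [h5]
      _ = (n:ℝ) ^ n * (y / n) ^ n := mul_pow _ _ _
      _ ≤ (n:ℝ) ^ n * Real.exp y := by
          have : (0:ℝ) ≤ (n:ℝ) ^ n := by positivity
          nlinarith [h4]
    calc y ^ p * Real.exp (-y) ≤ y ^ n * Real.exp (-y) := by
          nlinarith [Real.exp_pos (-y)]
    _ ≤ ((n:ℝ) ^ n * Real.exp y) * Real.exp (-y) := by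
          nlinarith [Real.exp_pos (-y)]
    _ = (n:ℝ) ^ n := by rw [mul_assoc, ← Real.exp_add]; simp

lemma rpow_mem_bound {x lo hi : ℝ} (hlo : 0 < lo) (h1 : lo ≤ x) (h2 : x ≤ hi) (p : ℝ) :
    x ^ p ≤ max (lo ^ p) (hi ^ p) := by
  rcases le_or_gt 0 p with hp | hp
  · exact le_max_of_le_right (Real.rpow_le_rpow (hlo.le.trans h1) h2 hp)
  · exact le_max_of_le_left (Real.rpow_le_rpow_of_nonpos hlo h1 hp.le)

lemma key_int (a T : ℝ) (ha : 1 < a) (hT : 0 < T) :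
    IntegrableOn (fun x : ℝ => x ^ (-a) * Real.exp (-(T * x⁻¹))) (Ioi 0) ∧
      ∫ x in Ioi 0, x ^ (-a) * Real.exp (-(T * x⁻¹)) = Real.Gamma (a - 1) * T ^ (1 - a) := by
  have hmeas : Measurable fun x : ℝ => x ^ (-a) * Real.exp (-(T * x⁻¹)) := by fun_prop
  constructor
  · have hsplit : Ioi (0:ℝ) = Ioc 0 1 ∪ Ioi 1 := (Ioc_union_Ioi_eq_Ioi zero_le_one).symm
    rw [hsplit]
    apply IntegrableOn.union
    · obtain ⟨c, hc1, hc⟩ := aux_pow_exp a (by linarith)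
      apply Measure.integrableOn_of_bounded (M := T ^ (-a) * c)
        (by rw [Real.volume_Ioc]; exact ENNReal.ofReal_ne_top) hmeas.aestronglyMeasurable
      filter_upwards [self_mem_ae_restrict measurableSet_Ioc] with x hx
      have hx0 : 0 < x := hx.1
      have hy : 0 < T * x⁻¹ := by positivity
      have e1 : x ^ (-a) = T ^ (-a) * (T * x⁻¹) ^ a := by
        rw [Real.mul_rpow hT.le (by positivity), Real.rpow_neg hT.le,
          Real.inv_rpow hx0.le, ← Real.rpow_neg hx0.le]
        field_simp
      rw [Real.norm_eq_abs, abs_of_nonneg (by positivity), e1, mul_assoc]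
      have := hc _ hy
      have hTa : (0:ℝ) < T ^ (-a) := by positivity
      nlinarith
    · apply (integrableOn_Ioi_rpow_of_lt (show -a < -1 by linarith) one_pos).mono'
        hmeas.aestronglyMeasurable
      filter_upwards [self_mem_ae_restrict measurableSet_Ioi] with x hx
      have hx0 : (0:ℝ) < x := lt_trans one_pos hx
      rw [Real.norm_eq_abs, abs_of_nonneg (by positivity)]
      have : Real.exp (-(T * x⁻¹)) ≤ 1 := Real.exp_le_one_iff.mpr (neg_nonpos.mpr (by positivity))
      nlinarith [Real.rpow_pos_of_pos hx0 (-a)]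
  · have sub := integral_comp_rpow_Ioi (fun y : ℝ => y ^ (a - 2) * Real.exp (-(T * y)))
      (p := -1) (by norm_num)
    have e : ∀ x ∈ Ioi (0:ℝ),
        (|(-1:ℝ)| * x ^ ((-1:ℝ) - 1)) • ((x ^ (-1:ℝ)) ^ (a - 2) * Real.exp (-(T * x ^ (-1:ℝ))))
          = x ^ (-a) * Real.exp (-(T * x⁻¹)) := by
      intro x hx
      have hx0 : (0:ℝ) < x := hx
      rw [smul_eq_mul, abs_neg, abs_one, one_mul, Real.rpow_neg_one]
      have h2 : (x⁻¹ : ℝ) ^ (a - 2) = x ^ (-(a - 2)) := by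
        rw [← Real.rpow_neg_one x, ← Real.rpow_mul hx0.le]; congr 1; ring
      rw [h2, ← mul_assoc, ← Real.rpow_add hx0,
        show (-1:ℝ) - 1 + -(a - 2) = -a by ring]
    rw [← setIntegral_congr_fun measurableSet_Ioi e, sub]
    have : ∫ y in Ioi (0:ℝ), y ^ (a - 2) * Real.exp (-(T * y))
        = (1 / T) ^ (a - 1) * Real.Gamma (a - 1) := by
      rw [← Real.integral_rpow_mul_exp_neg_mul_Ioi (by linarith : 0 < a - 1) hT]
      congr 1
      ext y
      congr 2
      ring
    rw [this, mul_comm]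
    congr 1
    rw [one_div, ← Real.rpow_neg_one, ← Real.rpow_mul hT.le]
    congr 1
    ring

lemma logbound (b M : ℝ) (hb : 0 < b) : ∃ K : ℝ, 0 < K ∧ ∀ ζ ∈ Set.Ioo (1/2 : ℝ) 1,
    (Real.log ((1 + ζ) / (1 - ζ))) ^ M * (1 - ζ) ^ (b / 2) ≤ K := by
  rcases le_or_gt M 0 with hM | hM
  · refine ⟨(Real.log 2) ^ M, Real.rpow_pos_of_pos (Real.log_pos one_lt_two) _, ?_⟩
    intro ζ hζ
    have h1 : (0:ℝ) < 1 - ζ := by linarith [hζ.2]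
    have hζ0 : (0:ℝ) < ζ := by linarith [hζ.1]
    have hrat : (2:ℝ) ≤ (1 + ζ) / (1 - ζ) := by
      rw [le_div_iff₀ h1]; linarith [hζ.1]
    have hL : Real.log 2 ≤ Real.log ((1 + ζ) / (1 - ζ)) :=
      Real.log_le_log (by norm_num) hrat
    have hb1 : Real.log ((1 + ζ) / (1 - ζ)) ^ M ≤ (Real.log 2) ^ M :=
      Real.rpow_le_rpow_of_nonpos (Real.log_pos one_lt_two) hL hM
    have hb2 : (1 - ζ) ^ (b / 2) ≤ 1 :=
      Real.rpow_le_one h1.le (by linarith) (by positivity)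
    nlinarith [Real.rpow_nonneg h1.le (b / 2),
      Real.rpow_pos_of_pos (Real.log_pos one_lt_two) M,
      Real.rpow_nonneg (Real.log_nonneg (by linarith : (1:ℝ) ≤ (1+ζ)/(1-ζ))) M]
  · set ε : ℝ := b / (2 * M) with hε
    have hε0 : 0 < ε := by positivity
    refine ⟨(2:ℝ) ^ (b / 2) / ε ^ M, by positivity, ?_⟩
    intro ζ hζ
    have h1 : (0:ℝ) < 1 - ζ := by linarith [hζ.2]
    have hζ0 : (0:ℝ) < ζ := by linarith [hζ.1]
    set x : ℝ := 2 / (1 - ζ) with hx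
    have hx0 : (0:ℝ) < x := by positivity
    have hrat0 : (0:ℝ) < (1 + ζ) / (1 - ζ) := by positivity
    have hrat1 : (1:ℝ) ≤ (1 + ζ) / (1 - ζ) := by rw [le_div_iff₀ h1]; linarith
    have hratx : (1 + ζ) / (1 - ζ) ≤ x := by
      rw [hx, div_le_div_iff₀ h1 h1]; nlinarith
    have hLnn : 0 ≤ Real.log ((1 + ζ) / (1 - ζ)) := Real.log_nonneg hrat1
    have hlogle : Real.log ((1 + ζ) / (1 - ζ)) ≤ x ^ ε / ε :=
      le_trans (Real.log_le_log hrat0 hratx) (Real.log_le_rpow_div hx0.le hε0)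
    have step1 : Real.log ((1 + ζ) / (1 - ζ)) ^ M ≤ (x ^ ε / ε) ^ M :=
      Real.rpow_le_rpow hLnn hlogle hM.le
    have e1 : (x ^ ε / ε) ^ M = x ^ (b / 2) / ε ^ M := by
      rw [Real.div_rpow (Real.rpow_nonneg hx0.le _) hε0.le, ← Real.rpow_mul hx0.le]
      congr 2
      rw [hε]
      field_simp [hM.ne']
    have e2 : x ^ (b / 2) = 2 ^ (b / 2) / (1 - ζ) ^ (b / 2) := by
      rw [hx, Real.div_rpow (by norm_num) h1.le]
    have hP : (0:ℝ) < (1 - ζ) ^ (b / 2) := Real.rpow_pos_of_pos h1 _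
    calc Real.log ((1 + ζ) / (1 - ζ)) ^ M * (1 - ζ) ^ (b / 2)
        ≤ (x ^ ε / ε) ^ M * (1 - ζ) ^ (b / 2) := by nlinarith
      _ = (2:ℝ) ^ (b / 2) / ε ^ M := by
          rw [e1, e2]; field_simp

lemma int_one_sub (b : ℝ) (hb : 0 < b) :
    IntegrableOn (fun ζ : ℝ => (1 - ζ) ^ (b / 2 - 1)) (Ioo 0 1) ∧
      ∫ ζ in Ioo (0:ℝ) 1, (1 - ζ) ^ (b / 2 - 1) = 2 / b := by
  have hii : IntervalIntegrable (fun x : ℝ => x ^ (b / 2 - 1)) volume 1 0 :=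
    intervalIntegral.intervalIntegrable_rpow' (by linarith)
  have h2 := hii.comp_sub_left 1
  constructor
  · exact (intervalIntegrable_iff_integrableOn_Ioo_of_le zero_le_one).mp (by simpa using h2)
  · rw [← integral_Ioc_eq_integral_Ioo, ← intervalIntegral.integral_of_le zero_le_one]
    have e := intervalIntegral.integral_comp_sub_left (a := 0) (b := 1)
      (fun x : ℝ => x ^ (b / 2 - 1)) 1
    rw [show (1:ℝ) - 1 = 0 by norm_num, show (1:ℝ) - 0 = 1 by norm_num] at e
    rw [e, integral_rpow (Or.inl (by linarith)), show b / 2 - 1 + 1 = b / 2 by ring,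
      Real.one_rpow, Real.zero_rpow (by positivity : b / 2 ≠ 0)]
    field_simp
    all_goals norm_num

theorem stmt_10 (a b M : ℝ) (ha : 1 < a) (hb : 0 < b) :
    ∃ C : ℝ, 0 < C ∧ ∀ T : ℝ, 0 < T →
      ∫ ζ in Set.Ioo (0 : ℝ) 1,
          (Real.log ((1 + ζ) / (1 - ζ))) ^ M * (1 - ζ ^ 2) ^ (b - 1) * ζ ^ (-a - M) *
            Real.exp (-(T * ζ⁻¹))
        ≤ C * T ^ (-a + 1) := by
  obtain ⟨K4, hK4pos, hK4⟩ := logbound b M hb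
  obtain ⟨ce, hce1, hce⟩ := aux_pow_exp (a - 1) (by linarith)
  set K1 : ℝ := max ((1:ℝ) ^ M) ((3:ℝ) ^ M) * max (((3:ℝ)/4) ^ (b-1)) ((1:ℝ) ^ (b-1)) with hK1
  set K2 : ℝ := K4 * max (((3:ℝ)/2) ^ (b-1)) ((2:ℝ) ^ (b-1)) *
    max (((1:ℝ)/2) ^ (-a-M)) ((1:ℝ) ^ (-a-M)) with hK2
  have hK1pos : 0 < K1 :=
    mul_pos (lt_of_lt_of_le (Real.rpow_pos_of_pos one_pos M) (le_max_left _ _))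
      (lt_of_lt_of_le (Real.rpow_pos_of_pos (by norm_num) _) (le_max_left _ _))
  have hK2pos : 0 < K2 :=
    mul_pos (mul_pos hK4pos
        (lt_of_lt_of_le (Real.rpow_pos_of_pos (by norm_num) _) (le_max_left _ _)))
      (lt_of_lt_of_le (Real.rpow_pos_of_pos (by norm_num) _) (le_max_left _ _))
  have hG : 0 < Real.Gamma (a - 1) := Real.Gamma_pos_of_pos (by linarith)
  refine ⟨K1 * Real.Gamma (a - 1) + K2 * ce * (2 / b),
    add_pos (mul_pos hK1pos hG)
      (mul_pos (mul_pos hK2pos (lt_of_lt_of_le one_pos hce1)) (by positivity)),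
    fun T hT => ?_⟩
  obtain ⟨hint1, hval1⟩ := key_int a T ha hT
  obtain ⟨hint2, hval2⟩ := int_one_sub b hb
  have hint1' : IntegrableOn (fun ζ : ℝ => ζ ^ (-a) * Real.exp (-(T * ζ⁻¹))) (Ioo 0 1) :=
    hint1.mono_set Ioo_subset_Ioi_self
  set g : ℝ → ℝ := fun ζ =>
    K1 * (ζ ^ (-a) * Real.exp (-(T * ζ⁻¹))) + (K2 * Real.exp (-T)) * (1 - ζ) ^ (b/2 - 1) with hg
  have hgint : IntegrableOn g (Ioo 0 1) := (hint1'.const_mul K1).add (hint2.const_mul _)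
  have hnn : 0 ≤ᵐ[volume.restrict (Ioo (0:ℝ) 1)] fun ζ =>
      (Real.log ((1 + ζ) / (1 - ζ))) ^ M * (1 - ζ ^ 2) ^ (b - 1) * ζ ^ (-a - M) *
        Real.exp (-(T * ζ⁻¹)) := by
    filter_upwards [self_mem_ae_restrict measurableSet_Ioo] with ζ hζ
    have h1 : (0:ℝ) < 1 - ζ := by linarith [hζ.2]
    have hζ0 : (0:ℝ) < ζ := hζ.1
    have hsq : (0:ℝ) ≤ 1 - ζ ^ 2 := by nlinarith [hζ.2]
    have hL : 0 ≤ Real.log ((1 + ζ) / (1 - ζ)) :=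
      Real.log_nonneg (by rw [le_div_iff₀ h1]; linarith)
    exact mul_nonneg (mul_nonneg (mul_nonneg (Real.rpow_nonneg hL M)
      (Real.rpow_nonneg hsq _)) (Real.rpow_nonneg hζ0.le _)) (Real.exp_pos _).le
  have hle : (fun ζ =>
      (Real.log ((1 + ζ) / (1 - ζ))) ^ M * (1 - ζ ^ 2) ^ (b - 1) * ζ ^ (-a - M) *
        Real.exp (-(T * ζ⁻¹))) ≤ᵐ[volume.restrict (Ioo (0:ℝ) 1)] g := by
    filter_upwards [self_mem_ae_restrict measurableSet_Ioo] with ζ hζ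
    have h1 : (0:ℝ) < 1 - ζ := by linarith [hζ.2]
    have hζ0 : (0:ℝ) < ζ := hζ.1
    have hζ1 : ζ < 1 := hζ.2
    set L := Real.log ((1 + ζ) / (1 - ζ)) with hLdef
    have hrat1 : (1:ℝ) ≤ (1 + ζ) / (1 - ζ) := by rw [le_div_iff₀ h1]; linarith
    have hLnn : 0 ≤ L := Real.log_nonneg hrat1
    simp only [hg]
    rcases le_or_gt ζ (1/2) with hhalf | hhalf
    · have hterm2 : 0 ≤ (K2 * Real.exp (-T)) * (1 - ζ) ^ (b/2 - 1) :=
        mul_nonneg (by positivity) (Real.rpow_nonneg h1.le _)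
      have hLlow : ζ ≤ L := by
        rw [hLdef, Real.log_div (by linarith) h1.ne']
        have l1 : 0 ≤ Real.log (1 + ζ) := Real.log_nonneg (by linarith)
        have l2 : Real.log (1 - ζ) ≤ -ζ := by
          have := Real.log_le_sub_one_of_pos h1
          linarith
        linarith
      have hLhigh : L ≤ 3 * ζ := by
        rw [hLdef, Real.log_div (by linarith) h1.ne']
        have l1 : Real.log (1 + ζ) ≤ ζ := by
          have := Real.log_le_sub_one_of_pos (show (0:ℝ) < 1 + ζ by linarith)
          linarith
        have l2 : -(2 * ζ) ≤ Real.log (1 - ζ) := by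
          have h3 : Real.log (1 - ζ)⁻¹ ≤ (1 - ζ)⁻¹ - 1 :=
            Real.log_le_sub_one_of_pos (by positivity)
          rw [Real.log_inv] at h3
          have h4 : (1 - ζ)⁻¹ ≤ 1 + 2 * ζ := by
            rw [inv_eq_one_div, div_le_iff₀ h1]; nlinarith
          linarith
        linarith
      have e2 : ζ ^ (-a - M) = ζ ^ (-M) * ζ ^ (-a) := by
        rw [← Real.rpow_add hζ0]; congr 1; ring
      have e3 : (L * ζ⁻¹) ^ M = L ^ M * ζ ^ (-M) := by
        rw [Real.mul_rpow hLnn (by positivity), ← Real.rpow_neg_one ζ,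
          ← Real.rpow_mul hζ0.le]
        congr 2
        ring
      have b1 : (L * ζ⁻¹) ^ M ≤ max ((1:ℝ) ^ M) ((3:ℝ) ^ M) := by
        apply rpow_mem_bound one_pos
        · have h := mul_le_mul_of_nonneg_right hLlow (by positivity : (0:ℝ) ≤ ζ⁻¹)
          rwa [mul_inv_cancel₀ hζ0.ne'] at h
        · have h := mul_le_mul_of_nonneg_right hLhigh (by positivity : (0:ℝ) ≤ ζ⁻¹)
          rwa [mul_assoc, mul_inv_cancel₀ hζ0.ne', mul_one] at h
      have b2 : (1 - ζ ^ 2) ^ (b - 1) ≤ max (((3:ℝ)/4) ^ (b-1)) ((1:ℝ) ^ (b-1)) :=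
        rpow_mem_bound (by norm_num) (by nlinarith) (by nlinarith) _
      have hmain : L ^ M * (1 - ζ ^ 2) ^ (b - 1) * ζ ^ (-a - M) * Real.exp (-(T * ζ⁻¹))
          ≤ K1 * (ζ ^ (-a) * Real.exp (-(T * ζ⁻¹))) := by
        have n1 : 0 ≤ (L * ζ⁻¹) ^ M := Real.rpow_nonneg (by positivity) _
        have n2 : 0 ≤ (1 - ζ ^ 2) ^ (b - 1) := Real.rpow_nonneg (by nlinarith) _
        have n3 : 0 ≤ ζ ^ (-a) * Real.exp (-(T * ζ⁻¹)) := by positivity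
        have m1pos : 0 < max ((1:ℝ) ^ M) ((3:ℝ) ^ M) :=
          lt_of_lt_of_le (Real.rpow_pos_of_pos one_pos M) (le_max_left _ _)
        calc L ^ M * (1 - ζ ^ 2) ^ (b - 1) * ζ ^ (-a - M) * Real.exp (-(T * ζ⁻¹))
            = ((L * ζ⁻¹) ^ M) * ((1 - ζ ^ 2) ^ (b - 1)) *
              (ζ ^ (-a) * Real.exp (-(T * ζ⁻¹))) := by
              rw [e2, e3]; ring
          _ ≤ (max ((1:ℝ) ^ M) ((3:ℝ) ^ M)) * (max (((3:ℝ)/4) ^ (b-1)) ((1:ℝ) ^ (b-1))) *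
              (ζ ^ (-a) * Real.exp (-(T * ζ⁻¹))) := by
              exact mul_le_mul (mul_le_mul b1 b2 n2 m1pos.le) le_rfl n3 (by positivity)
          _ = K1 * (ζ ^ (-a) * Real.exp (-(T * ζ⁻¹))) := by rw [hK1]
      linarith
    · have hterm1 : 0 ≤ K1 * (ζ ^ (-a) * Real.exp (-(T * ζ⁻¹))) := by positivity
      have hmem : ζ ∈ Ioo (1/2:ℝ) 1 := ⟨hhalf, hζ1⟩
      have hfac : (1:ℝ) - ζ ^ 2 = (1 - ζ) * (1 + ζ) := by ring
      have e4 : ((1 - ζ) * (1 + ζ)) ^ (b - 1) = (1-ζ)^(b-1) * (1+ζ)^(b-1) :=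
        Real.mul_rpow h1.le (by linarith)
      have e5 : (1 - ζ) ^ (b - 1) = (1-ζ)^(b/2-1) * (1-ζ)^(b/2) := by
        rw [← Real.rpow_add h1]; congr 1; ring
      have b3 : L ^ M * (1-ζ)^(b/2) ≤ K4 := hK4 ζ hmem
      have b4 : (1+ζ)^(b-1) ≤ max (((3:ℝ)/2) ^ (b-1)) ((2:ℝ) ^ (b-1)) :=
        rpow_mem_bound (by norm_num) (by linarith) (by linarith) _
      have b5 : ζ ^ (-a-M) ≤ max (((1:ℝ)/2) ^ (-a-M)) ((1:ℝ) ^ (-a-M)) :=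
        rpow_mem_bound (by norm_num) hhalf.le hζ1.le _
      have b6 : Real.exp (-(T * ζ⁻¹)) ≤ Real.exp (-T) := by
        apply Real.exp_le_exp.mpr
        have hinv : (1:ℝ) ≤ ζ⁻¹ := by rw [inv_eq_one_div, le_div_iff₀ hζ0]; linarith
        nlinarith
      have n3 : 0 ≤ (1-ζ)^(b/2-1) := Real.rpow_nonneg h1.le _
      have n5 : 0 ≤ (1+ζ)^(b-1) := Real.rpow_nonneg (by linarith) _
      have n6 : 0 ≤ ζ^(-a-M) := Real.rpow_nonneg hζ0.le _
      have hmain : L ^ M * (1 - ζ ^ 2) ^ (b - 1) * ζ ^ (-a - M) * Real.exp (-(T * ζ⁻¹))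
          ≤ (K2 * Real.exp (-T)) * (1-ζ)^(b/2-1) := by
        calc L ^ M * (1 - ζ ^ 2) ^ (b - 1) * ζ ^ (-a - M) * Real.exp (-(T * ζ⁻¹))
            = ((L ^ M * (1-ζ)^(b/2)) * (1+ζ)^(b-1) * ζ^(-a-M) * Real.exp (-(T * ζ⁻¹))) *
              (1-ζ)^(b/2-1) := by
              rw [hfac, e4, e5]; ring
          _ ≤ (K4 * max (((3:ℝ)/2) ^ (b-1)) ((2:ℝ) ^ (b-1)) *
              max (((1:ℝ)/2) ^ (-a-M)) ((1:ℝ) ^ (-a-M)) * Real.exp (-T)) *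
              (1-ζ)^(b/2-1) := by
              apply mul_le_mul_of_nonneg_right _ n3
              apply mul_le_mul (mul_le_mul (mul_le_mul b3 b4 n5 hK4pos.le) b5 n6
                (by positivity)) b6 (Real.exp_pos _).le (by positivity)
          _ = (K2 * Real.exp (-T)) * (1-ζ)^(b/2-1) := by rw [hK2]
      linarith
  have step := integral_mono_of_nonneg hnn hgint hle
  have hgval : ∫ ζ in Ioo (0:ℝ) 1, g ζ
      = K1 * (∫ ζ in Ioo (0:ℝ) 1, ζ ^ (-a) * Real.exp (-(T * ζ⁻¹)))
        + (K2 * Real.exp (-T)) * (2 / b) := by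
    simp only [hg]
    rw [integral_add (hint1'.const_mul K1) (hint2.const_mul _), integral_const_mul,
      integral_const_mul, hval2]
  have hI1 : ∫ ζ in Ioo (0:ℝ) 1, ζ ^ (-a) * Real.exp (-(T * ζ⁻¹))
      ≤ Real.Gamma (a - 1) * T ^ (1 - a) := by
    rw [← hval1]
    apply setIntegral_mono_set hint1 ?_ (HasSubset.Subset.eventuallyLE Ioo_subset_Ioi_self)
    filter_upwards [self_mem_ae_restrict measurableSet_Ioi] with x hx
    exact mul_nonneg (Real.rpow_nonneg (le_of_lt hx) _) (Real.exp_pos _).le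
  have hexp : Real.exp (-T) ≤ ce * T ^ (1 - a) := by
    have h := hce T hT
    have hTpos : 0 < T ^ (1 - a) := Real.rpow_pos_of_pos hT _
    have hid : T ^ (1 - a) * T ^ (a - 1) = 1 := by
      rw [← Real.rpow_add hT]; norm_num
    calc Real.exp (-T) = (T ^ (1 - a) * T ^ (a - 1)) * Real.exp (-T) := by
          rw [hid, one_mul]
      _ = T ^ (1 - a) * (T ^ (a - 1) * Real.exp (-T)) := by ring
      _ ≤ T ^ (1 - a) * ce := by nlinarith
      _ = ce * T ^ (1 - a) := mul_comm _ _
  calc ∫ ζ in Set.Ioo (0 : ℝ) 1,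
        (Real.log ((1 + ζ) / (1 - ζ))) ^ M * (1 - ζ ^ 2) ^ (b - 1) * ζ ^ (-a - M) *
          Real.exp (-(T * ζ⁻¹))
      ≤ ∫ ζ in Ioo (0:ℝ) 1, g ζ := step
    _ = K1 * (∫ ζ in Ioo (0:ℝ) 1, ζ ^ (-a) * Real.exp (-(T * ζ⁻¹)))
        + (K2 * Real.exp (-T)) * (2 / b) := hgval
    _ ≤ K1 * (Real.Gamma (a - 1) * T ^ (1 - a)) + (K2 * (ce * T ^ (1 - a))) * (2 / b) := by
        apply add_le_add
        · exact mul_le_mul_of_nonneg_left hI1 hK1pos.le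
        · apply mul_le_mul_of_nonneg_right _ (by positivity)
          exact mul_le_mul_of_nonneg_left hexp hK2pos.le
    _ = (K1 * Real.Gamma (a - 1) + K2 * ce * (2 / b)) * T ^ (-a + 1) := by
        rw [show -a + 1 = 1 - a by ring]; ring
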